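/- Let H be a hypergraph with vertex set V and hyperedge multiset E given by an injective-indexed family (e_a)_{a ∈ A}, and suppose each vertex lies in at most d hyperedges. Color V greedily: this can be done so that each hyperedge contains a vertex whose color is unique within that hyperedge, using at most d + 1 colors. As a corollary, if G is a graph and A is an independent set such that every vertex outside A has at most d neighbors in A, then V(G) \ A can be colored with d + 1 colors so that every vertex of A (with at least one neighbor) sees some color exactly once among its neighbors. -/

import Mathlib

open Finset

/-- Auxiliary: conflict-free coloring with `d+1` colors for degree-`d` hypergraphs
(no injectivity needed). Proof by induction on `d`. -/
theorem aux_cf : ∀ (d : ℕ) (V : Type) [Fintype V] [DecidableEq V] (A : Type) [Fintype A]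
    (e : A → Finset V), (∀ a, (e a).Nonempty) →
    (∀ v : V, (Finset.univ.filter (fun a : A => v ∈ e a)).card ≤ d) →
    ∃ c : V → Fin (d + 1), ∀ a : A, ∃ x ∈ e a, ∀ y ∈ e a, y ≠ x → c y ≠ c x := by
  intro d
  induction d with
  | zero =>
    intro V _ _ A _ e hne hdeg
    refine ⟨fun _ => 0, fun a => ?_⟩
    exfalso
    obtain ⟨v, hv⟩ := hne a
    have h1 : a ∈ Finset.univ.filter (fun a : A => v ∈ e a) := by simp [hv]
    have h2 := Finset.card_pos.mpr ⟨a, h1⟩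
    have h3 := hdeg v
    omega
  | succ d ih =>
    intro V _ _ A _ e hne hdeg
    classical
    -- a maximal set `T` meeting every edge in at most one vertex
    set coll := Finset.univ.powerset.filter
      (fun T : Finset V => ∀ a, (e a ∩ T).card ≤ 1) with hcolldef
    have hcoll : (∅ : Finset V) ∈ coll := by simp [hcolldef]
    obtain ⟨T, hT, hTmax⟩ := Finset.exists_max_image coll Finset.card ⟨∅, hcoll⟩
    have hTP : ∀ a, (e a ∩ T).card ≤ 1 := (Finset.mem_filter.mp hT).2
    -- every vertex outside `T` lies in an edge that meets `T`
    have hkill : ∀ v : V, v ∉ T → ∃ a, v ∈ e a ∧ (e a ∩ T).Nonempty := by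
      intro v hv
      by_contra h
      push_neg at h
      have hins : insert v T ∈ coll := by
        refine Finset.mem_filter.mpr ⟨Finset.mem_powerset.mpr (Finset.subset_univ _), ?_⟩
        intro a
        by_cases hva : v ∈ e a
        · have hempty : e a ∩ T = ∅ :=
            h a hva
          have : e a ∩ insert v T = {v} := by
            ext x
            simp only [Finset.mem_inter, Finset.mem_insert, Finset.mem_singleton]
            constructor
            · rintro ⟨hx, hx' | hx'⟩
              · exact hx'
              · exact absurd (Finset.mem_inter.mpr ⟨hx, hx'⟩) (by simp [hempty])
            · rintro rfl; exact ⟨hva, Or.inl rfl⟩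
          simp [this]
        · have : e a ∩ insert v T = e a ∩ T := by
            ext x
            simp only [Finset.mem_inter, Finset.mem_insert]
            constructor
            · rintro ⟨hx, hx' | hx'⟩
              · exact absurd hx (hx' ▸ hva)
              · exact ⟨hx, hx'⟩
            · rintro ⟨hx, hx'⟩; exact ⟨hx, Or.inr hx'⟩
          rw [this]; exact hTP a
      have hle := hTmax _ hins
      rw [Finset.card_insert_of_notMem hv] at hle
      omega
    -- residual hypergraph on edges disjoint from `T`
    obtain ⟨c', hc'⟩ := ih V {a : A // e a ∩ T = ∅} (fun a => e a.1)
      (fun a => hne a.1)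
      (by
        intro v
        beta_reduce
        by_cases hvT : v ∈ T
        · have : Finset.univ.filter (fun a : {a : A // e a ∩ T = ∅} => v ∈ e a.1) = ∅ := by
            rw [Finset.filter_eq_empty_iff]
            intro a _ hva
            have : v ∈ e a.1 ∩ T := Finset.mem_inter.mpr ⟨hva, hvT⟩
            simp [a.2] at this
          simp [this]
        · obtain ⟨a₀, hva₀, hTa₀⟩ := hkill v hvT
          have hsub : (Finset.univ.filter (fun a : {a : A // e a ∩ T = ∅} => v ∈ e a.1)).image
              Subtype.val ⊆ (Finset.univ.filter (fun a : A => v ∈ e a)).erase a₀ := by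
            intro a ha
            simp only [Finset.mem_image, Finset.mem_filter, Finset.mem_univ, true_and] at ha
            obtain ⟨b, hb, rfl⟩ := ha
            refine Finset.mem_erase.mpr ⟨?_, by simp [hb]⟩
            intro hba
            rw [hba] at hb
            exact absurd (hba ▸ b.2) (Finset.nonempty_iff_ne_empty.mp hTa₀)
          have hcardim : (Finset.univ.filter
              (fun a : {a : A // e a ∩ T = ∅} => v ∈ e a.1)).card =
              ((Finset.univ.filter (fun a : {a : A // e a ∩ T = ∅} => v ∈ e a.1)).image
                Subtype.val).card :=
            (Finset.card_image_of_injective _ Subtype.val_injective).symm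
          have ha₀mem : a₀ ∈ Finset.univ.filter (fun a : A => v ∈ e a) := by simp [hva₀]
          have := Finset.card_le_card hsub
          rw [Finset.card_erase_of_mem ha₀mem] at this
          have hd := hdeg v
          omega)
    -- combine: color `T` with the fresh last color
    refine ⟨fun v => if v ∈ T then Fin.last (d + 1) else (c' v).castSucc, fun a => ?_⟩
    by_cases h : e a ∩ T = ∅
    · obtain ⟨x, hx, hux⟩ := hc' ⟨a, h⟩
      have hxT : x ∉ T := fun hxT => by
        have : x ∈ e a ∩ T := Finset.mem_inter.mpr ⟨hx, hxT⟩
        simp [h] at this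
      refine ⟨x, hx, fun y hy hyx => ?_⟩
      have hyT : y ∉ T := fun hyT => by
        have : y ∈ e a ∩ T := Finset.mem_inter.mpr ⟨hy, hyT⟩
        simp [h] at this
      simp only [if_neg hxT, if_neg hyT]
      intro hcy
      exact hux y hy hyx (Fin.castSucc_injective _ hcy)
    · obtain ⟨x, hx⟩ := Finset.nonempty_iff_ne_empty.mpr h
      obtain ⟨hxe, hxT⟩ := Finset.mem_inter.mp hx
      refine ⟨x, hxe, fun y hy hyx => ?_⟩
      have hyT : y ∉ T := by
        intro hyT
        have hsub : {y, x} ⊆ e a ∩ T := by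
          intro z hz
          rcases Finset.mem_insert.mp hz with rfl | hz
          · exact Finset.mem_inter.mpr ⟨hy, hyT⟩
          · rw [Finset.mem_singleton.mp hz]; exact hx
        have h2 : ({y, x} : Finset V).card = 2 := Finset.card_pair hyx
        have := Finset.card_le_card hsub
        have := hTP a
        omega
      simp only [if_neg hyT, if_pos hxT]
      exact fun hcy => absurd hcy (Fin.ne_of_lt (Fin.castSucc_lt_last _))

theorem greedy_cf_and_independent_corollary :
    (∀ (V A : Type) [Fintype V] [DecidableEq V] [Fintype A] (d : ℕ)
        (e : A → Finset V), Function.Injective e → (∀ a, (e a).Nonempty) →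
        (∀ v : V, (Finset.univ.filter (fun a : A => v ∈ e a)).card ≤ d) →
        ∃ c : V → Fin (d + 1),
          ∀ a : A, ∃ x ∈ e a, ∀ y ∈ e a, y ≠ x → c y ≠ c x) ∧
    (∀ (V : Type) [Fintype V] [DecidableEq V] (G : SimpleGraph V)
        [DecidableRel G.Adj] (d : ℕ) (A : Finset V),
        (∀ a ∈ A, ∀ a' ∈ A, ¬ G.Adj a a') →
        (∀ b : V, b ∉ A → (G.neighborFinset b ∩ A).card ≤ d) →
        ∃ c : V → Fin (d + 1),
          ∀ a ∈ A, 0 < G.degree a →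
            ∃ col : Fin (d + 1), ∃! b : V, b ∉ A ∧ G.Adj a b ∧ c b = col) := by
  constructor
  · intro V A _ _ _ d e _ hne hdeg
    exact aux_cf d V A e hne hdeg
  · intro V _ _ G _ d A hind hdeg
    classical
    obtain ⟨c, hc⟩ := aux_cf d V {a : V // a ∈ A ∧ 0 < G.degree a}
      (fun a => G.neighborFinset a.1)
      (fun a => Finset.card_pos.mp (by
        rw [SimpleGraph.card_neighborFinset_eq_degree]
        exact a.2.2))
      (by
        intro v
        beta_reduce
        by_cases hvA : v ∈ A
        · have : Finset.univ.filter
              (fun a : {a : V // a ∈ A ∧ 0 < G.degree a} => v ∈ G.neighborFinset a.1) = ∅ := by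
            rw [Finset.filter_eq_empty_iff]
            intro a _ hva
            exact hind a.1 a.2.1 v hvA ((SimpleGraph.mem_neighborFinset _ _ _).mp hva)
          rw [this]
          simp
        · have hsub : (Finset.univ.filter
              (fun a : {a : V // a ∈ A ∧ 0 < G.degree a} =>
                v ∈ G.neighborFinset a.1)).image Subtype.val ⊆ G.neighborFinset v ∩ A := by
            intro a ha
            simp only [Finset.mem_image, Finset.mem_filter, Finset.mem_univ, true_and] at ha
            obtain ⟨b, hb, rfl⟩ := ha
            refine Finset.mem_inter.mpr ⟨?_, b.2.1⟩
            rw [SimpleGraph.mem_neighborFinset] at hb ⊢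
            exact hb.symm
          have hcardim := Finset.card_image_of_injective
            (Finset.univ.filter (fun a : {a : V // a ∈ A ∧ 0 < G.degree a} =>
              v ∈ G.neighborFinset a.1)) (Subtype.val_injective)
          have h1 := Finset.card_le_card hsub
          have h2 := hdeg v hvA
          omega)
    refine ⟨c, fun a ha hdega => ?_⟩
    obtain ⟨x, hx, hux⟩ := hc ⟨a, ha, hdega⟩
    rw [SimpleGraph.mem_neighborFinset] at hx
    have hxA : x ∉ A := fun hxA => hind a ha x hxA hx
    refine ⟨c x, x, ⟨hxA, hx, rfl⟩, ?_⟩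
    rintro b ⟨-, hadj, hcb⟩
    by_contra hbx
    exact hux b ((SimpleGraph.mem_neighborFinset _ _ _).mpr hadj) hbx hcb
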